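/- arXiv:2006.12741 — 2 statements merged into one kernel-verified Lean document; each statement's English description precedes it below -/
import Mathlib

section
/- For every natural number n with n ≥ 1, there exists a connected highly irregular simple graph on n vertices if and only if n ∉ {3, 5, 7}. Here a connected graph is highly irregular if for every vertex v, the degrees of the neighbours of v are pairwise distinct. -/
open Finset

set_option linter.unusedSectionVars false

/-- A connected simple graph is highly irregular if the neighbours of each vertex
have pairwise distinct degrees. -/
def SimpleGraph.HighlyIrregular {V : Type*} (G : SimpleGraph V) : Prop :=
  ∀ v u w : V, G.Adj v u → G.Adj v w → u ≠ w →
    Nat.card (G.neighborSet u) ≠ Nat.card (G.neighborSet w)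

namespace HIProof

variable {n : ℕ} (G : SimpleGraph (Fin n)) [DecidableRel G.Adj]

lemma hi_degree (h : G.HighlyIrregular) {v u w : Fin n} (h1 : G.Adj v u) (h2 : G.Adj v w)
    (h3 : u ≠ w) : G.degree u ≠ G.degree w := by
  have := h v u w h1 h2 h3
  rwa [Nat.card_eq_fintype_card, Nat.card_eq_fintype_card,
    SimpleGraph.card_neighborSet_eq_degree, SimpleGraph.card_neighborSet_eq_degree] at this

lemma walk_closed (S : Set (Fin n)) (hS : ∀ a ∈ S, ∀ b, G.Adj a b → b ∈ S)
    {x y : Fin n} (p : G.Walk x y) (hx : x ∈ S) : y ∈ S := by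
  induction p with
  | nil => exact hx
  | cons h p ih => exact ih (hS _ hx _ h)

lemma exists_adj (hc : G.Connected) (hn : 2 ≤ n) (x : Fin n) : ∃ y, G.Adj x y := by
  have : Nontrivial (Fin n) := Fin.nontrivial_iff_two_le.mpr hn
  obtain ⟨z, hz⟩ := exists_ne x
  obtain ⟨p⟩ := hc.preconnected x z
  have hnil : ¬ p.Nil := SimpleGraph.Walk.not_nil_of_ne (Ne.symm hz)
  exact ⟨_, SimpleGraph.Walk.adj_snd hnil⟩

lemma adj_iff_of {v : Fin n} {s : Finset (Fin n)} (hs : ∀ x ∈ s, G.Adj v x)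
    (hcard : G.degree v ≤ s.card) : ∀ x, G.Adj v x ↔ x ∈ s := by
  have hsub : s ⊆ G.neighborFinset v := fun x hx =>
    (SimpleGraph.mem_neighborFinset _ _ _).mpr (hs x hx)
  have heq : s = G.neighborFinset v :=
    Finset.eq_of_subset_of_card_le hsub (by rwa [SimpleGraph.card_neighborFinset_eq_degree])
  intro x
  rw [← SimpleGraph.mem_neighborFinset, ← heq]

lemma deg_le_one_unique {a : Fin n} (h : G.degree a ≤ 1) {v w : Fin n}
    (hv : G.Adj a v) (hw : G.Adj a w) : v = w := by
  have hv' := (SimpleGraph.mem_neighborFinset _ _ _).mpr hv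
  have hw' := (SimpleGraph.mem_neighborFinset _ _ _).mpr hw
  exact Finset.card_le_one.mp (le_trans (le_of_eq (SimpleGraph.card_neighborFinset_eq_degree _ _)) h) _ hv' _ hw'

lemma exists_nbr_deg (hhi : G.HighlyIrregular) (v : Fin n)
    (hmax : ∀ w, G.degree w ≤ G.degree v) {i : ℕ} (h1 : 1 ≤ i) (h2 : i ≤ G.degree v) :
    ∃ u, G.Adj v u ∧ G.degree u = i := by
  have hinj : Set.InjOn (fun w => G.degree w) ((G.neighborFinset v : Finset (Fin n)) : Set (Fin n)) := by
    intro a ha b hb hab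
    by_contra hne
    exact hi_degree G hhi ((SimpleGraph.mem_neighborFinset _ _ _).mp ha)
      ((SimpleGraph.mem_neighborFinset _ _ _).mp hb) hne hab
  have himg : (G.neighborFinset v).image (fun w => G.degree w) = Finset.Icc 1 (G.degree v) := by
    apply Finset.eq_of_subset_of_card_le
    · intro j hj
      simp only [Finset.mem_image] at hj
      obtain ⟨a, ha, rfl⟩ := hj
      have hadj : G.Adj a v := ((SimpleGraph.mem_neighborFinset _ _ _).mp ha).symm
      have : 0 < G.degree a := (SimpleGraph.degree_pos_iff_exists_adj _ _).mpr ⟨v, hadj⟩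
      exact Finset.mem_Icc.mpr ⟨this, hmax a⟩
    · rw [Finset.card_image_of_injOn hinj, SimpleGraph.card_neighborFinset_eq_degree]
      simp
  have : i ∈ (G.neighborFinset v).image (fun w => G.degree w) := by
    rw [himg]; exact Finset.mem_Icc.mpr ⟨h1, h2⟩
  simp only [Finset.mem_image] at this
  obtain ⟨u, hu, hdeg⟩ := this
  exact ⟨u, (SimpleGraph.mem_neighborFinset _ _ _).mp hu, hdeg⟩

lemma two_le_max (hc : G.Connected) (hn : 3 ≤ n) (v : Fin n)
    (hmax : ∀ w, G.degree w ≤ G.degree v) : 2 ≤ G.degree v := by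
  by_contra h
  push_neg at h
  have hall : ∀ w, G.degree w ≤ 1 := fun w => le_trans (hmax w) (by omega)
  obtain ⟨a, ha⟩ := exists_adj G hc (by omega) v
  have hS : ∀ x ∈ ({v, a} : Set (Fin n)), ∀ b, G.Adj x b → b ∈ ({v, a} : Set (Fin n)) := by
    rintro x (rfl | rfl) b hb
    · right; exact (deg_le_one_unique G (hall x) hb ha).symm ▸ rfl
    · left; exact (deg_le_one_unique G (hall x) hb ha.symm)
  have : ∃ x : Fin n, x ∉ ({v, a} : Set (Fin n)) := by
    by_contra hx
    push_neg at hx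
    have hsub : (Finset.univ : Finset (Fin n)) ⊆ {v, a} := by
      intro x _
      rcases hx x with rfl | rfl
      · simp
      · simp
    have := Finset.card_le_card hsub
    have h2 : ({v, a} : Finset (Fin n)).card ≤ 2 :=
      le_trans (Finset.card_insert_le _ _) (by simp)
    simp only [Finset.card_univ, Fintype.card_fin] at this
    omega
  obtain ⟨x, hx⟩ := this
  obtain ⟨p⟩ := hc.preconnected v x
  exact hx (walk_closed G _ hS p (by left; rfl))

lemma second_nbr {x p : Fin n} (hdeg : 2 ≤ G.degree x) (hp : G.Adj x p) :
    ∃ q, G.Adj x q ∧ q ≠ p := by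
  by_contra h
  push_neg at h
  have hsub : G.neighborFinset x ⊆ {p} := by
    intro q hq
    simp [h q ((SimpleGraph.mem_neighborFinset _ _ _).mp hq)]
  have := Finset.card_le_card hsub
  rw [SimpleGraph.card_neighborFinset_eq_degree, Finset.card_singleton] at this
  omega

lemma third_nbr {x p q : Fin n} (hdeg : 3 ≤ G.degree x) (hp : G.Adj x p) (hq : G.Adj x q) :
    ∃ r, G.Adj x r ∧ r ≠ p ∧ r ≠ q := by
  by_contra h
  push_neg at h
  have hsub : G.neighborFinset x ⊆ {p, q} := by
    intro r hr
    have := h r ((SimpleGraph.mem_neighborFinset _ _ _).mp hr)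
    by_cases hrp : r = p
    · simp [hrp]
    · simp [this hrp]
  have := Finset.card_le_card hsub
  rw [SimpleGraph.card_neighborFinset_eq_degree] at this
  have h2 : ({p, q} : Finset (Fin n)).card ≤ 2 :=
    le_trans (Finset.card_insert_le _ _) (by simp)
  omega

lemma card2 {α : Type*} [DecidableEq α] {a b : α} (h : a ≠ b) :
    ({a, b} : Finset α).card = 2 := by
  rw [Finset.card_insert_of_notMem (by simp [h]), Finset.card_singleton]

lemma card3 {α : Type*} [DecidableEq α] {a b c : α} (h1 : a ≠ b) (h2 : a ≠ c) (h3 : b ≠ c) :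
    ({a, b, c} : Finset α).card = 3 := by
  rw [Finset.card_insert_of_notMem (by simp [h1, h2]), card2 h3]

lemma card4 {α : Type*} [DecidableEq α] {a b c d : α} (h1 : a ≠ b) (h2 : a ≠ c) (h3 : a ≠ d)
    (h4 : b ≠ c) (h5 : b ≠ d) (h6 : c ≠ d) : ({a, b, c, d} : Finset α).card = 4 := by
  rw [Finset.card_insert_of_notMem (by simp [h1, h2, h3]), card3 h4 h5 h6]

lemma card_le_succ {α : Type*} [DecidableEq α] {s : Finset α} {m : ℕ} (a : α)
    (h : s.card ≤ m) : (insert a s).card ≤ m + 1 :=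
  le_trans (Finset.card_insert_le _ _) (by omega)

lemma exists_outside {s : Finset (Fin n)} (h : s.card < n) : ∃ x : Fin n, x ∉ s := by
  by_contra hx
  push_neg at hx
  have := Finset.card_le_card (fun x _ => hx x : (Finset.univ : Finset (Fin n)) ⊆ s)
  simp only [Finset.card_univ, Fintype.card_fin] at this
  omega

/-- Setup: a maximum-degree vertex `v` with `deg v = d ≥ 2` has a degree-`d` neighbour `u`,
a degree-1 neighbour `a1`; and `u` has a degree-1 neighbour `b1 ≠ a1`. -/
lemma setup (hhi : G.HighlyIrregular) (v : Fin n)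
    (hmax : ∀ w, G.degree w ≤ G.degree v) (h2 : 2 ≤ G.degree v) :
    ∃ u a1 b1, G.Adj v u ∧ G.degree u = G.degree v ∧ G.Adj v a1 ∧ G.degree a1 = 1 ∧
      G.Adj u b1 ∧ G.degree b1 = 1 ∧ a1 ≠ b1 ∧ (∀ w, G.Adj a1 w → w = v) ∧
      (∀ w, G.Adj b1 w → w = u) := by
  obtain ⟨u, huadj, hudeg⟩ := exists_nbr_deg G hhi v hmax (by omega) (le_refl _)
  obtain ⟨a1, ha1adj, ha1deg⟩ := exists_nbr_deg G hhi v hmax (le_refl 1) (by omega)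
  have hmaxu : ∀ w, G.degree w ≤ G.degree u := by rw [hudeg]; exact hmax
  obtain ⟨b1, hb1adj, hb1deg⟩ := exists_nbr_deg G hhi u hmaxu (le_refl 1) (by omega)
  have ha1v : ∀ w, G.Adj a1 w → w = v :=
    fun w hw => deg_le_one_unique G (le_of_eq ha1deg) hw ha1adj.symm
  have hb1u : ∀ w, G.Adj b1 w → w = u :=
    fun w hw => deg_le_one_unique G (le_of_eq hb1deg) hw hb1adj.symm
  have ha1b1 : a1 ≠ b1 := by
    intro h
    subst h
    have := ha1v u hb1adj.symm
    rw [this] at huadj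
    exact G.irrefl huadj
  exact ⟨u, a1, b1, huadj, hudeg, ha1adj, ha1deg, hb1adj, hb1deg, ha1b1, ha1v, hb1u⟩

lemma d_ne_pred (hhi : G.HighlyIrregular) (v : Fin n) (h2 : 2 ≤ G.degree v)
    (hvn : G.degree v = n - 1) (hmax : ∀ w, G.degree w ≤ G.degree v) : False := by
  obtain ⟨a1, ha1adj, ha1deg⟩ := exists_nbr_deg G hhi v hmax (le_refl 1) (by omega)
  obtain ⟨u, huadj, hudeg⟩ := exists_nbr_deg G hhi v hmax (by omega) (le_refl _)
  have hn3 : 3 ≤ n := by omega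
  have ha1u : a1 ≠ u := by intro h; rw [h, hudeg] at ha1deg; omega
  have hall : G.neighborFinset u = Finset.univ.erase u := by
    apply Finset.eq_of_subset_of_card_le
    · intro x hx
      have hadj := (SimpleGraph.mem_neighborFinset _ _ _).mp hx
      exact Finset.mem_erase.mpr ⟨hadj.ne.symm, Finset.mem_univ _⟩
    · rw [SimpleGraph.card_neighborFinset_eq_degree, Finset.card_erase_of_mem (Finset.mem_univ _)]
      simp [hudeg, hvn]
  have hadja1 : G.Adj u a1 := by
    rw [← SimpleGraph.mem_neighborFinset, hall]
    exact Finset.mem_erase.mpr ⟨ha1u, Finset.mem_univ _⟩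
  have := deg_le_one_unique G (le_of_eq ha1deg) ha1adj.symm hadja1.symm
  rw [this] at huadj
  exact G.irrefl huadj

lemma d2_max (hc : G.Connected) (hhi : G.HighlyIrregular) (hn : 5 ≤ n) (v : Fin n)
    (hv : G.degree v = 2) (hmax : ∀ w, G.degree w ≤ G.degree v) : False := by
  obtain ⟨u, a1, c, huadj, hudeg, ha1adj, ha1deg, hcadj, hcdeg, ha1c, ha1v, hcu⟩ :=
    setup G hhi v hmax (by omega)
  -- degrees: v, u have degree 2; a1, c degree 1
  have hvu : v ≠ u := huadj.ne
  have hva1 : v ≠ a1 := ha1adj.ne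
  have hvc : v ≠ c := by intro h; rw [← h, hv] at hcdeg; omega
  have hua1 : u ≠ a1 := by intro h; rw [← h, hudeg, hv] at ha1deg; omega
  have huc : u ≠ c := hcadj.ne
  -- neighbourhoods
  have hNv : ∀ x, G.Adj v x ↔ x ∈ ({a1, u} : Finset (Fin n)) := by
    apply adj_iff_of
    · intro x hx
      rcases Finset.mem_insert.mp hx with rfl | hx
      · exact ha1adj
      · rw [Finset.mem_singleton.mp hx]; exact huadj
    · rw [hv, card2 (by intro h; rw [h] at ha1deg; rw [hudeg, hv] at ha1deg; omega)]
  have hNu : ∀ x, G.Adj u x ↔ x ∈ ({c, v} : Finset (Fin n)) := by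
    apply adj_iff_of
    · intro x hx
      rcases Finset.mem_insert.mp hx with rfl | hx
      · exact hcadj
      · rw [Finset.mem_singleton.mp hx]; exact huadj.symm
    · rw [hudeg, hv, card2 (Ne.symm hvc)]
  -- closed set
  set S : Set (Fin n) := {v, a1, u, c} with hS
  have hclosed : ∀ a ∈ S, ∀ b, G.Adj a b → b ∈ S := by
    rintro a (rfl | rfl | rfl | rfl) b hb
    · rcases Finset.mem_insert.mp ((hNv b).mp hb) with rfl | hx
      · right; left; rfl
      · rw [Finset.mem_singleton.mp hx]; right; right; left; rfl
    · rw [ha1v b hb]; left; rfl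
    · rcases Finset.mem_insert.mp ((hNu b).mp hb) with rfl | hx
      · right; right; right; rfl
      · rw [Finset.mem_singleton.mp hx]; left; rfl
    · rw [hcu b hb]; right; right; left; rfl
  have hcard4 : ({v, a1, u, c} : Finset (Fin n)).card ≤ 4 :=
    card_le_succ _ (card_le_succ _ (card_le_succ _ (le_of_eq (Finset.card_singleton c))))
  obtain ⟨x, hx⟩ := exists_outside (n := n) (s := {v, a1, u, c}) (by omega)
  obtain ⟨p⟩ := hc.preconnected v x
  have : x ∈ S := walk_closed G S hclosed p (by left; rfl)
  apply hx
  rcases this with rfl | rfl | rfl | rfl <;> simp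

lemma no_hi_3 (G : SimpleGraph (Fin 3)) [DecidableRel G.Adj] (hc : G.Connected)
    (hhi : G.HighlyIrregular) : False := by
  obtain ⟨v, -, hmax⟩ := Finset.exists_max_image Finset.univ (fun w => G.degree w)
    ⟨0, Finset.mem_univ 0⟩
  have hmax : ∀ w, G.degree w ≤ G.degree v := fun w => hmax w (Finset.mem_univ w)
  have h2 : 2 ≤ G.degree v := two_le_max G hc (by omega) v hmax
  have h3 : G.degree v < 3 := by
    have := G.degree_lt_card_verts v
    simpa using this
  exact d_ne_pred G hhi v h2 (by omega) hmax

lemma mem_of_nodup7 {a b c d e f g : Fin 7} (hn : [a, b, c, d, e, f, g].Nodup) (x : Fin 7) :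
    x = a ∨ x = b ∨ x = c ∨ x = d ∨ x = e ∨ x = f ∨ x = g := by
  have hcard : [a, b, c, d, e, f, g].toFinset.card = 7 := by
    rw [List.toFinset_card_of_nodup hn]; rfl
  have huniv := Finset.eq_univ_of_card [a, b, c, d, e, f, g].toFinset
    (by rw [hcard]; simp)
  have hx : x ∈ [a, b, c, d, e, f, g].toFinset := huniv ▸ Finset.mem_univ x
  simpa using hx

lemma no_hi_5 (G : SimpleGraph (Fin 5)) [DecidableRel G.Adj] (hc : G.Connected)
    (hhi : G.HighlyIrregular) : False := by
  obtain ⟨v, -, hmax⟩ := Finset.exists_max_image Finset.univ (fun w => G.degree w)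
    ⟨0, Finset.mem_univ 0⟩
  have hmax : ∀ w, G.degree w ≤ G.degree v := fun w => hmax w (Finset.mem_univ w)
  have h2 : 2 ≤ G.degree v := two_le_max G hc (by omega) v hmax
  have h5 : G.degree v < 5 := by
    have := G.degree_lt_card_verts v
    simpa using this
  have hcases : G.degree v = 2 ∨ G.degree v = 3 ∨ G.degree v = 4 := by omega
  rcases hcases with h | h | h
  · exact d2_max G hc hhi (by omega) v h hmax
  · obtain ⟨u, a1, b1, huadj, hudeg, ha1adj, ha1deg, hb1adj, hb1deg, ha1b1, ha1v, hb1u⟩ :=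
      setup G hhi v hmax (by omega)
    have hmaxu : ∀ w, G.degree w ≤ G.degree u := by rw [hudeg]; exact hmax
    obtain ⟨a2, ha2adj, ha2deg⟩ := exists_nbr_deg G hhi v hmax (i := 2) (by omega) (by omega)
    obtain ⟨b2, hb2adj, hb2deg⟩ := exists_nbr_deg G hhi u hmaxu (i := 2) (by omega) (by rw [hudeg]; omega)
    by_cases hab : a2 = b2
    · subst hab
      exact hi_degree G hhi ha2adj.symm hb2adj.symm huadj.ne hudeg.symm
    · have hvu : v ≠ u := huadj.ne
      have hva1 : v ≠ a1 := ha1adj.ne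
      have hva2 : v ≠ a2 := ha2adj.ne
      have hvb1 : v ≠ b1 := by intro hh; rw [← hh, h] at hb1deg; omega
      have hvb2 : v ≠ b2 := by intro hh; rw [← hh, h] at hb2deg; omega
      have hua1 : u ≠ a1 := by intro hh; rw [← hh, hudeg, h] at ha1deg; omega
      have hua2 : u ≠ a2 := by intro hh; rw [← hh, hudeg, h] at ha2deg; omega
      have hub1 : u ≠ b1 := hb1adj.ne
      have hub2 : u ≠ b2 := hb2adj.ne
      have ha1a2 : a1 ≠ a2 := by intro hh; rw [← hh, ha1deg] at ha2deg; omega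
      have ha1b2 : a1 ≠ b2 := by intro hh; rw [← hh, ha1deg] at hb2deg; omega
      have ha2b1 : a2 ≠ b1 := by intro hh; rw [← hh, ha2deg] at hb1deg; omega
      have hb1b2 : b1 ≠ b2 := by intro hh; rw [← hh, hb1deg] at hb2deg; omega
      have hnodup : [v, u, a1, a2, b1, b2].Nodup := by
        simp [List.nodup_cons, hvu, hva1, hva2, hvb1, hvb2, hua1, hua2, hub1, hub2,
          ha1a2, ha1b1, ha1b2, ha2b1, hab, hb1b2]
      have hle := hnodup.length_le_card
      simp at hle
  · exact d_ne_pred G hhi v (by omega) (by omega) hmax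

lemma case_d3 (G : SimpleGraph (Fin 7)) [DecidableRel G.Adj] (hc : G.Connected)
    (hhi : G.HighlyIrregular) (v : Fin 7) (h : G.degree v = 3)
    (hmax : ∀ w, G.degree w ≤ G.degree v) : False := by
  obtain ⟨u, a1, b1, huadj, hudeg, ha1adj, ha1deg, hb1adj, hb1deg, ha1b1, ha1v, hb1u⟩ :=
    setup G hhi v hmax (by omega)
  have hmaxu : ∀ w, G.degree w ≤ G.degree u := by rw [hudeg]; exact hmax
  obtain ⟨a2, ha2adj, ha2deg⟩ := exists_nbr_deg G hhi v hmax (i := 2) (by omega) (by omega)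
  obtain ⟨b2, hb2adj, hb2deg⟩ := exists_nbr_deg G hhi u hmaxu (i := 2) (by omega)
    (by rw [hudeg]; omega)
  by_cases hab : a2 = b2
  · subst hab
    exact hi_degree G hhi ha2adj.symm hb2adj.symm huadj.ne hudeg.symm
  have hvu : v ≠ u := huadj.ne
  have hva1 : v ≠ a1 := ha1adj.ne
  have hva2 : v ≠ a2 := ha2adj.ne
  have hvb1 : v ≠ b1 := by intro hh; rw [← hh, h] at hb1deg; omega
  have hvb2 : v ≠ b2 := by intro hh; rw [← hh, h] at hb2deg; omega
  have hua1 : u ≠ a1 := by intro hh; rw [← hh, hudeg, h] at ha1deg; omega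
  have hua2 : u ≠ a2 := by intro hh; rw [← hh, hudeg, h] at ha2deg; omega
  have hub1 : u ≠ b1 := hb1adj.ne
  have hub2 : u ≠ b2 := hb2adj.ne
  have ha1a2 : a1 ≠ a2 := by intro hh; rw [← hh, ha1deg] at ha2deg; omega
  have ha1b2 : a1 ≠ b2 := by intro hh; rw [← hh, ha1deg] at hb2deg; omega
  have ha2b1 : a2 ≠ b1 := by intro hh; rw [← hh, ha2deg] at hb1deg; omega
  have hb1b2 : b1 ≠ b2 := by intro hh; rw [← hh, hb1deg] at hb2deg; omega
  have hNv : ∀ x, G.Adj v x ↔ x ∈ ({a1, a2, u} : Finset (Fin 7)) := by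
    apply adj_iff_of
    · intro x hx
      rcases Finset.mem_insert.mp hx with rfl | hx
      · exact ha1adj
      rcases Finset.mem_insert.mp hx with rfl | hx
      · exact ha2adj
      · rw [Finset.mem_singleton.mp hx]; exact huadj
    · rw [h, card3 ha1a2 (Ne.symm hua1) (Ne.symm hua2)]
  have hNu : ∀ x, G.Adj u x ↔ x ∈ ({b1, b2, v} : Finset (Fin 7)) := by
    apply adj_iff_of
    · intro x hx
      rcases Finset.mem_insert.mp hx with rfl | hx
      · exact hb1adj
      rcases Finset.mem_insert.mp hx with rfl | hx
      · exact hb2adj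
      · rw [Finset.mem_singleton.mp hx]; exact huadj.symm
    · rw [hudeg, h, card3 hb1b2 (Ne.symm hvb1) (Ne.symm hvb2)]
  have ha2nu : ¬ G.Adj u a2 := by
    intro hh
    exact hi_degree G hhi hh hb2adj hab (by rw [ha2deg, hb2deg])
  have hb2nv : ¬ G.Adj v b2 := by
    intro hh
    exact hi_degree G hhi hh ha2adj (Ne.symm hab) (by rw [ha2deg, hb2deg])
  obtain ⟨w, hwadj, hwv⟩ := second_nbr G (x := a2) (by omega) ha2adj.symm
  have hwu : w ≠ u := by intro hh; rw [hh] at hwadj; exact ha2nu hwadj.symm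
  have hwa1 : w ≠ a1 := by intro hh; rw [hh] at hwadj; exact hva2 (ha1v a2 hwadj.symm).symm
  have hwb1 : w ≠ b1 := by intro hh; rw [hh] at hwadj; exact hua2 (hb1u a2 hwadj.symm).symm
  have hwa2 : w ≠ a2 := hwadj.ne.symm
  by_cases hwb2 : w = b2
  · subst hwb2
    have hNa2 : ∀ x, G.Adj a2 x ↔ x ∈ ({v, w} : Finset (Fin 7)) := by
      apply adj_iff_of
      · intro x hx
        rcases Finset.mem_insert.mp hx with rfl | hx
        · exact ha2adj.symm
        · rw [Finset.mem_singleton.mp hx]; exact hwadj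
      · rw [ha2deg, card2 hvb2]
    have hNb2 : ∀ x, G.Adj w x ↔ x ∈ ({u, a2} : Finset (Fin 7)) := by
      apply adj_iff_of
      · intro x hx
        rcases Finset.mem_insert.mp hx with rfl | hx
        · exact hb2adj.symm
        · rw [Finset.mem_singleton.mp hx]; exact hwadj.symm
      · rw [hb2deg, card2 hua2]
    set S : Set (Fin 7) := {v, u, a1, a2, b1, w} with hS
    have hclosed : ∀ a ∈ S, ∀ b, G.Adj a b → b ∈ S := by
      rintro a (rfl | rfl | rfl | rfl | rfl | rfl) b hb
      · rcases Finset.mem_insert.mp ((hNv b).mp hb) with rfl | hx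
        · right; right; left; rfl
        rcases Finset.mem_insert.mp hx with rfl | hx
        · right; right; right; left; rfl
        · rw [Finset.mem_singleton.mp hx]; right; left; rfl
      · rcases Finset.mem_insert.mp ((hNu b).mp hb) with rfl | hx
        · right; right; right; right; left; rfl
        rcases Finset.mem_insert.mp hx with rfl | hx
        · right; right; right; right; right; rfl
        · rw [Finset.mem_singleton.mp hx]; left; rfl
      · rw [ha1v b hb]; left; rfl
      · rcases Finset.mem_insert.mp ((hNa2 b).mp hb) with rfl | hx
        · left; rfl
        · rw [Finset.mem_singleton.mp hx]; right; right; right; right; right; rfl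
      · rw [hb1u b hb]; right; left; rfl
      · rcases Finset.mem_insert.mp ((hNb2 b).mp hb) with rfl | hx
        · right; left; rfl
        · rw [Finset.mem_singleton.mp hx]; right; right; right; left; rfl
    have hcard6 : ({v, u, a1, a2, b1, w} : Finset (Fin 7)).card ≤ 6 :=
      card_le_succ _ (card_le_succ _ (card_le_succ _ (card_le_succ _ (card_le_succ _
        (le_of_eq (Finset.card_singleton _))))))
    obtain ⟨x, hx⟩ := exists_outside (n := 7) (s := {v, u, a1, a2, b1, w}) (by omega)
    obtain ⟨p⟩ := hc.preconnected v x
    have hxS : x ∈ S := walk_closed G S hclosed p (by left; rfl)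
    apply hx
    rcases hxS with rfl | rfl | rfl | rfl | rfl | rfl <;> simp
  · have hnodup : [v, u, a1, a2, b1, b2, w].Nodup := by
      simp [List.nodup_cons, hvu, hva1, hva2, hvb1, hvb2, hua1, hua2, hub1, hub2,
        ha1a2, ha1b1, ha1b2, ha2b1, hab, hb1b2, Ne.symm hwv, Ne.symm hwu, Ne.symm hwa1,
        Ne.symm hwa2, Ne.symm hwb1, Ne.symm hwb2]
    have hNa2 : ∀ x, G.Adj a2 x ↔ x ∈ ({v, w} : Finset (Fin 7)) := by
      apply adj_iff_of
      · intro x hx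
        rcases Finset.mem_insert.mp hx with rfl | hx
        · exact ha2adj.symm
        · rw [Finset.mem_singleton.mp hx]; exact hwadj
      · rw [ha2deg, card2 (Ne.symm hwv)]
    obtain ⟨q, hqadj, hqu⟩ := second_nbr G (x := b2) (by omega) hb2adj.symm
    have hqv : q ≠ v := by intro hh; rw [hh] at hqadj; exact hb2nv hqadj.symm
    have hqa1 : q ≠ a1 := by intro hh; rw [hh] at hqadj; exact hvb2 (ha1v b2 hqadj.symm).symm
    have hqb1 : q ≠ b1 := by intro hh; rw [hh] at hqadj; exact hub2 (hb1u b2 hqadj.symm).symm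
    have hqb2 : q ≠ b2 := hqadj.ne.symm
    have hqa2 : q ≠ a2 := by
      intro hh
      rw [hh] at hqadj
      rcases Finset.mem_insert.mp ((hNa2 b2).mp hqadj.symm) with hb | hb
      · exact hvb2 hb.symm
      · exact hwb2 (Finset.mem_singleton.mp hb).symm
    have hq : q = w := by
      rcases mem_of_nodup7 hnodup q with hh | hh | hh | hh | hh | hh | hh
      · exact absurd hh hqv
      · exact absurd hh hqu
      · exact absurd hh hqa1
      · exact absurd hh hqa2
      · exact absurd hh hqb1
      · exact absurd hh hqb2
      · exact hh
    exact hi_degree G hhi hwadj.symm (hq ▸ hqadj).symm hab (by rw [ha2deg, hb2deg])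

lemma case_d4 (G : SimpleGraph (Fin 7)) [DecidableRel G.Adj] (hc : G.Connected)
    (hhi : G.HighlyIrregular) (v : Fin 7) (h : G.degree v = 4)
    (hmax : ∀ w, G.degree w ≤ G.degree v) : False := by
  obtain ⟨u, a1, b1, huadj, hudeg, ha1adj, ha1deg, hb1adj, hb1deg, ha1b1, ha1v, hb1u⟩ :=
    setup G hhi v hmax (by omega)
  have hmaxu : ∀ w, G.degree w ≤ G.degree u := by rw [hudeg]; exact hmax
  obtain ⟨a2, ha2adj, ha2deg⟩ := exists_nbr_deg G hhi v hmax (i := 2) (by omega) (by omega)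
  obtain ⟨b2, hb2adj, hb2deg⟩ := exists_nbr_deg G hhi u hmaxu (i := 2) (by omega)
    (by rw [hudeg]; omega)
  obtain ⟨a3, ha3adj, ha3deg⟩ := exists_nbr_deg G hhi v hmax (i := 3) (by omega) (by omega)
  obtain ⟨b3, hb3adj, hb3deg⟩ := exists_nbr_deg G hhi u hmaxu (i := 3) (by omega)
    (by rw [hudeg]; omega)
  by_cases hab : a2 = b2
  · subst hab
    exact hi_degree G hhi ha2adj.symm hb2adj.symm huadj.ne hudeg.symm
  have hvu : v ≠ u := huadj.ne
  have hva1 : v ≠ a1 := ha1adj.ne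
  have hva2 : v ≠ a2 := ha2adj.ne
  have hva3 : v ≠ a3 := ha3adj.ne
  have hvb1 : v ≠ b1 := by intro hh; rw [← hh, h] at hb1deg; omega
  have hvb2 : v ≠ b2 := by intro hh; rw [← hh, h] at hb2deg; omega
  have hvb3 : v ≠ b3 := by intro hh; rw [← hh, h] at hb3deg; omega
  have hua1 : u ≠ a1 := by intro hh; rw [← hh, hudeg, h] at ha1deg; omega
  have hua2 : u ≠ a2 := by intro hh; rw [← hh, hudeg, h] at ha2deg; omega
  have hua3 : u ≠ a3 := by intro hh; rw [← hh, hudeg, h] at ha3deg; omega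
  have hub1 : u ≠ b1 := hb1adj.ne
  have hub2 : u ≠ b2 := hb2adj.ne
  have hub3 : u ≠ b3 := hb3adj.ne
  have ha1a2 : a1 ≠ a2 := by intro hh; rw [← hh, ha1deg] at ha2deg; omega
  have ha1a3 : a1 ≠ a3 := by intro hh; rw [← hh, ha1deg] at ha3deg; omega
  have ha1b2 : a1 ≠ b2 := by intro hh; rw [← hh, ha1deg] at hb2deg; omega
  have ha1b3 : a1 ≠ b3 := by intro hh; rw [← hh, ha1deg] at hb3deg; omega
  have ha2a3 : a2 ≠ a3 := by intro hh; rw [← hh, ha2deg] at ha3deg; omega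
  have ha2b1 : a2 ≠ b1 := by intro hh; rw [← hh, ha2deg] at hb1deg; omega
  have ha2b3 : a2 ≠ b3 := by intro hh; rw [← hh, ha2deg] at hb3deg; omega
  have ha3b1 : a3 ≠ b1 := by intro hh; rw [← hh, ha3deg] at hb1deg; omega
  have ha3b2 : a3 ≠ b2 := by intro hh; rw [← hh, ha3deg] at hb2deg; omega
  have hb1b2 : b1 ≠ b2 := by intro hh; rw [← hh, hb1deg] at hb2deg; omega
  have hb1b3 : b1 ≠ b3 := by intro hh; rw [← hh, hb1deg] at hb3deg; omega
  have hb2b3 : b2 ≠ b3 := by intro hh; rw [← hh, hb2deg] at hb3deg; omega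
  -- b3 must equal a3, else we would have 8 distinct vertices
  have hb3a3 : b3 = a3 := by
    by_contra hne
    have hne' : a3 ≠ b3 := fun hh => hne hh.symm
    have hnodup : [v, u, a1, a2, b1, b2, a3, b3].Nodup := by
      simp [List.nodup_cons, Ne.symm ha3b2, hne', hvu, hva1, hva2, hva3, hvb1, hvb2, hvb3, hua1, hua2, hua3,
        hub1, hub2, hub3, ha1a2, ha1a3, ha1b1, ha1b2, ha1b3, ha2a3, ha2b1, hab, ha2b3,
        ha3b1, ha3b2, Ne.symm ha3b1, hb1b2, hb1b3, hb2b3]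
    have hle := hnodup.length_le_card
    simp at hle
  rw [hb3a3] at hb3adj
  have hnodup7 : [v, u, a1, b1, a2, b2, a3].Nodup := by
    simp [List.nodup_cons, hvu, hva1, hva2, hva3, hvb1, hvb2, hua1, hua2, hua3,
      hub1, hub2, ha1a2, ha1a3, ha1b1, ha1b2, ha2a3, ha2b1, hab, Ne.symm ha2b1,
      ha3b1, ha3b2, Ne.symm ha3b1, Ne.symm ha3b2, hb1b2, Ne.symm ha2a3]
  have hNv : ∀ x, G.Adj v x ↔ x ∈ ({a1, a2, a3, u} : Finset (Fin 7)) := by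
    apply adj_iff_of
    · intro x hx
      rcases Finset.mem_insert.mp hx with rfl | hx
      · exact ha1adj
      rcases Finset.mem_insert.mp hx with rfl | hx
      · exact ha2adj
      rcases Finset.mem_insert.mp hx with rfl | hx
      · exact ha3adj
      · rw [Finset.mem_singleton.mp hx]; exact huadj
    · rw [h, card4 ha1a2 ha1a3 (Ne.symm hua1) ha2a3 (Ne.symm hua2) (Ne.symm hua3)]
  have hNu : ∀ x, G.Adj u x ↔ x ∈ ({b1, b2, a3, v} : Finset (Fin 7)) := by
    apply adj_iff_of
    · intro x hx
      rcases Finset.mem_insert.mp hx with rfl | hx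
      · exact hb1adj
      rcases Finset.mem_insert.mp hx with rfl | hx
      · exact hb2adj
      rcases Finset.mem_insert.mp hx with rfl | hx
      · exact hb3adj
      · rw [Finset.mem_singleton.mp hx]; exact huadj.symm
    · rw [hudeg, h,
        card4 hb1b2 (Ne.symm ha3b1) (Ne.symm hvb1) (Ne.symm ha3b2) (Ne.symm hvb2) (Ne.symm hva3)]
  have ha2nu : ¬ G.Adj u a2 := by
    intro hh
    exact hi_degree G hhi hh hb2adj hab (by rw [ha2deg, hb2deg])
  have hb2nv : ¬ G.Adj v b2 := by
    intro hh
    exact hi_degree G hhi hh ha2adj (Ne.symm hab) (by rw [ha2deg, hb2deg])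
  obtain ⟨w, hwadj, hwv⟩ := second_nbr G (x := a2) (by omega) ha2adj.symm
  have hwu : w ≠ u := by intro hh; rw [hh] at hwadj; exact ha2nu hwadj.symm
  have hwa1 : w ≠ a1 := by intro hh; rw [hh] at hwadj; exact hva2 (ha1v a2 hwadj.symm).symm
  have hwb1 : w ≠ b1 := by intro hh; rw [hh] at hwadj; exact hua2 (hb1u a2 hwadj.symm).symm
  have hwa2 : w ≠ a2 := hwadj.ne.symm
  have hw : w = b2 ∨ w = a3 := by
    rcases mem_of_nodup7 hnodup7 w with hh | hh | hh | hh | hh | hh | hh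
    · exact absurd hh hwv
    · exact absurd hh hwu
    · exact absurd hh hwa1
    · exact absurd hh hwb1
    · exact absurd hh hwa2
    · exact Or.inl hh
    · exact Or.inr hh
  rcases hw with rfl | rfl
  · -- a2 ~ b2 (here w = b2)
    have hNa2 : ∀ x, G.Adj a2 x ↔ x ∈ ({v, w} : Finset (Fin 7)) := by
      apply adj_iff_of
      · intro x hx
        rcases Finset.mem_insert.mp hx with rfl | hx
        · exact ha2adj.symm
        · rw [Finset.mem_singleton.mp hx]; exact hwadj
      · rw [ha2deg, card2 hvb2]
    have hNb2 : ∀ x, G.Adj w x ↔ x ∈ ({u, a2} : Finset (Fin 7)) := by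
      apply adj_iff_of
      · intro x hx
        rcases Finset.mem_insert.mp hx with rfl | hx
        · exact hb2adj.symm
        · rw [Finset.mem_singleton.mp hx]; exact hwadj.symm
      · rw [hb2deg, card2 hua2]
    obtain ⟨r, hradj, hrv, hru⟩ := third_nbr G (x := a3) (by omega) ha3adj.symm hb3adj.symm
    have hra1 : r ≠ a1 := by intro hh; rw [hh] at hradj; exact hva3 (ha1v a3 hradj.symm).symm
    have hrb1 : r ≠ b1 := by intro hh; rw [hh] at hradj; exact hua3 (hb1u a3 hradj.symm).symm
    have hra2 : r ≠ a2 := by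
      intro hh
      rw [hh] at hradj
      rcases Finset.mem_insert.mp ((hNa2 a3).mp hradj.symm) with hb | hb
      · exact hva3 hb.symm
      · exact ha3b2 (Finset.mem_singleton.mp hb)
    have hrb2 : r ≠ w := by
      intro hh
      rw [hh] at hradj
      rcases Finset.mem_insert.mp ((hNb2 a3).mp hradj.symm) with hb | hb
      · exact hua3 hb.symm
      · exact ha2a3 (Finset.mem_singleton.mp hb).symm
    have hra3 : r ≠ a3 := hradj.ne.symm
    rcases mem_of_nodup7 hnodup7 r with hh | hh | hh | hh | hh | hh | hh
    · exact hrv hh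
    · exact hru hh
    · exact hra1 hh
    · exact hrb1 hh
    · exact hra2 hh
    · exact hrb2 hh
    · exact hra3 hh
  · -- a2 ~ a3 (here w = a3)
    have hNa2 : ∀ x, G.Adj a2 x ↔ x ∈ ({v, w} : Finset (Fin 7)) := by
      apply adj_iff_of
      · intro x hx
        rcases Finset.mem_insert.mp hx with rfl | hx
        · exact ha2adj.symm
        · rw [Finset.mem_singleton.mp hx]; exact hwadj
      · rw [ha2deg, card2 hva3]
    have hNa3 : ∀ x, G.Adj w x ↔ x ∈ ({v, u, a2} : Finset (Fin 7)) := by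
      apply adj_iff_of
      · intro x hx
        rcases Finset.mem_insert.mp hx with rfl | hx
        · exact ha3adj.symm
        rcases Finset.mem_insert.mp hx with rfl | hx
        · exact hb3adj.symm
        · rw [Finset.mem_singleton.mp hx]; exact hwadj.symm
      · rw [ha3deg, card3 hvu hva2 hua2]
    obtain ⟨q, hqadj, hqu⟩ := second_nbr G (x := b2) (by omega) hb2adj.symm
    have hqv : q ≠ v := by intro hh; rw [hh] at hqadj; exact hb2nv hqadj.symm
    have hqa1 : q ≠ a1 := by intro hh; rw [hh] at hqadj; exact hvb2 (ha1v b2 hqadj.symm).symm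
    have hqb1 : q ≠ b1 := by intro hh; rw [hh] at hqadj; exact hub2 (hb1u b2 hqadj.symm).symm
    have hqb2 : q ≠ b2 := hqadj.ne.symm
    have hqa2 : q ≠ a2 := by
      intro hh
      rw [hh] at hqadj
      rcases Finset.mem_insert.mp ((hNa2 b2).mp hqadj.symm) with hb | hb
      · exact hvb2 hb.symm
      · exact ha3b2 (Finset.mem_singleton.mp hb).symm
    have hqa3 : q ≠ w := by
      intro hh
      rw [hh] at hqadj
      rcases Finset.mem_insert.mp ((hNa3 b2).mp hqadj.symm) with hb | hb
      · exact hvb2 hb.symm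
      rcases Finset.mem_insert.mp hb with hb2' | hb2'
      · exact hub2 hb2'.symm
      · exact hab (Finset.mem_singleton.mp hb2').symm
    rcases mem_of_nodup7 hnodup7 q with hh | hh | hh | hh | hh | hh | hh
    · exact hqv hh
    · exact hqu hh
    · exact hqa1 hh
    · exact hqb1 hh
    · exact hqa2 hh
    · exact hqb2 hh
    · exact hqa3 hh

lemma mem_of_nodup7' {a b c d e f g : Fin 7} (hn : [a, b, c, d, e, f, g].Nodup) (x : Fin 7) :
    x = a ∨ x = b ∨ x = c ∨ x = d ∨ x = e ∨ x = f ∨ x = g := mem_of_nodup7 hn x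

lemma no_hi_7 (G : SimpleGraph (Fin 7)) [DecidableRel G.Adj] (hc : G.Connected)
    (hhi : G.HighlyIrregular) : False := by
  obtain ⟨v, -, hmax⟩ := Finset.exists_max_image Finset.univ (fun w => G.degree w)
    ⟨0, Finset.mem_univ 0⟩
  have hmax : ∀ w, G.degree w ≤ G.degree v := fun w => hmax w (Finset.mem_univ w)
  have h2 : 2 ≤ G.degree v := two_le_max G hc (by omega) v hmax
  have h7 : G.degree v < 7 := by
    have := G.degree_lt_card_verts v
    simpa using this
  have hcases : G.degree v = 2 ∨ G.degree v = 3 ∨ G.degree v = 4 ∨ G.degree v = 5 ∨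
      G.degree v = 6 := by omega
  rcases hcases with h | h | h | h | h
  · exact d2_max G hc hhi (by omega) v h hmax
  · exact case_d3 G hc hhi v h hmax
  · exact case_d4 G hc hhi v h hmax
  · -- degree 5
    obtain ⟨u, a1, b1, huadj, hudeg, ha1adj, ha1deg, hb1adj, hb1deg, ha1b1, ha1v, hb1u⟩ :=
      setup G hhi v hmax (by omega)
    have hvu : v ≠ u := huadj.ne
    have ha1u : a1 ≠ u := by intro hh; rw [hh, hudeg, h] at ha1deg; omega
    have hNu : G.neighborFinset u = (Finset.univ.erase u).erase a1 := by
      apply Finset.eq_of_subset_of_card_le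
      · intro x hx
        have hadj := (SimpleGraph.mem_neighborFinset _ _ _).mp hx
        refine Finset.mem_erase.mpr ⟨?_, Finset.mem_erase.mpr ⟨hadj.ne.symm, Finset.mem_univ _⟩⟩
        intro hh
        subst hh
        exact hvu (ha1v u hadj.symm).symm
      · rw [SimpleGraph.card_neighborFinset_eq_degree,
          Finset.card_erase_of_mem (Finset.mem_erase.mpr ⟨ha1u, Finset.mem_univ _⟩),
          Finset.card_erase_of_mem (Finset.mem_univ _)]
        simp [hudeg, h]
    obtain ⟨a2, ha2adj, ha2deg⟩ := exists_nbr_deg G hhi v hmax (i := 2) (by omega) (by omega)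
    have hua2 : G.Adj u a2 := by
      rw [← SimpleGraph.mem_neighborFinset, hNu]
      refine Finset.mem_erase.mpr ⟨?_, Finset.mem_erase.mpr ⟨?_, Finset.mem_univ _⟩⟩
      · intro hh; rw [hh, ha1deg] at ha2deg; omega
      · intro hh; rw [hh, hudeg, h] at ha2deg; omega
    exact hi_degree G hhi ha2adj.symm hua2.symm hvu hudeg.symm
  · exact d_ne_pred G hhi v (by omega) (by omega) hmax

/-! ### Constructions -/

lemma degree_eq_of {m : ℕ} (G : SimpleGraph (Fin m)) [DecidableRel G.Adj] (x : Fin m)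
    (s : Finset ℕ) (h : ∀ y : Fin m, G.Adj x y ↔ y.val ∈ s) (hlt : ∀ y ∈ s, y < m) :
    G.degree x = s.card := by
  rw [← SimpleGraph.card_neighborFinset_eq_degree]
  apply Finset.card_bij (fun a _ => a.val)
  · intro a ha
    exact (h a).mp ((SimpleGraph.mem_neighborFinset _ _ _).mp ha)
  · intro a _ b _ hab
    exact Fin.ext hab
  · intro b hb
    refine ⟨⟨b, hlt b hb⟩, ?_, rfl⟩
    exact (SimpleGraph.mem_neighborFinset _ _ _).mpr ((h _).mpr hb)

def halfG (k : ℕ) : SimpleGraph (Fin (2 * k)) where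
  Adj x y := (x.val < k ∧ k ≤ y.val ∧ y.val ≤ k + x.val) ∨
    (y.val < k ∧ k ≤ x.val ∧ x.val ≤ k + y.val)
  symm := by constructor; intro x y hxy; tauto
  loopless := by constructor; intro x hx; rcases hx with ⟨h1, h2, _⟩ | ⟨h1, h2, _⟩ <;> omega

lemma halfG_adj {k : ℕ} (x y : Fin (2 * k)) : (halfG k).Adj x y ↔
    (x.val < k ∧ k ≤ y.val ∧ y.val ≤ k + x.val) ∨
    (y.val < k ∧ k ≤ x.val ∧ x.val ≤ k + y.val) := Iff.rfl

instance {k : ℕ} : DecidableRel (halfG k).Adj := fun x y =>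
  decidable_of_iff _ (halfG_adj x y).symm

lemma halfG_degree {k : ℕ} (x : Fin (2 * k)) :
    (halfG k).degree x = if x.val < k then x.val + 1 else 2 * k - x.val := by
  have hx2 := x.isLt
  by_cases hx : x.val < k
  · rw [if_pos hx]
    rw [degree_eq_of _ x (Finset.Icc k (k + x.val))
      (fun y => by rw [halfG_adj]; simp only [Finset.mem_Icc]; omega)
      (fun y hy => by simp only [Finset.mem_Icc] at hy; omega)]
    rw [Nat.card_Icc]
    omega
  · rw [if_neg hx]
    rw [degree_eq_of _ x (Finset.Ico (x.val - k) k)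
      (fun y => by rw [halfG_adj]; simp only [Finset.mem_Ico]; omega)
      (fun y hy => by simp only [Finset.mem_Ico] at hy; omega)]
    rw [Nat.card_Ico]
    omega

lemma halfG_hi (k : ℕ) : (halfG k).HighlyIrregular := by
  intro v u w hvu hvw hne
  have hval : u.val ≠ w.val := fun hh => hne (Fin.ext hh)
  have hu2 := u.isLt
  have hw2 := w.isLt
  rw [Nat.card_eq_fintype_card, Nat.card_eq_fintype_card,
    SimpleGraph.card_neighborSet_eq_degree, SimpleGraph.card_neighborSet_eq_degree,
    halfG_degree, halfG_degree]
  rw [halfG_adj] at hvu hvw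
  split_ifs <;> omega

lemma halfG_connected {k : ℕ} (hk : 1 ≤ k) : (halfG k).Connected := by
  rw [SimpleGraph.connected_iff]
  refine ⟨?_, ⟨⟨0, by omega⟩⟩⟩
  have key : ∀ z : Fin (2 * k), (halfG k).Reachable z ⟨k, by omega⟩ := by
    intro z
    have hz2 := z.isLt
    by_cases hz : z.val < k
    · exact SimpleGraph.Adj.reachable (by rw [halfG_adj]; left; simp; omega)
    · by_cases hz1 : z.val = k
      · have : z = ⟨k, by omega⟩ := Fin.ext (by simp [hz1])
        rw [this]
      · have h1 : (halfG k).Adj z ⟨k - 1, by omega⟩ := by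
          rw [halfG_adj]; right; simp; omega
        have h2 : (halfG k).Adj (⟨k - 1, by omega⟩ : Fin (2 * k)) ⟨k, by omega⟩ := by
          rw [halfG_adj]; left; simp; omega
        exact h1.reachable.trans h2.reachable
  intro x y
  exact (key x).trans (key y).symm

/-- Base relation for the odd-order highly irregular graph: the half graph with the
edge `(k-1, 2k-2)` removed, plus a new vertex `2k` joined to `k-1` and `2k-2`. -/
def oddR (k : ℕ) (x y : ℕ) : Prop :=
  (x < k ∧ k ≤ y ∧ y ≤ k + x ∧ y < 2 * k ∧ ¬(x = k - 1 ∧ y = 2 * k - 2)) ∨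
  (x = 2 * k ∧ (y = k - 1 ∨ y = 2 * k - 2))

instance {k x y : ℕ} : Decidable (oddR k x y) := by unfold oddR; infer_instance

def oddG (k : ℕ) (hk : 4 ≤ k) : SimpleGraph (Fin (2 * k + 1)) where
  Adj x y := oddR k x.val y.val ∨ oddR k y.val x.val
  symm := by constructor; intro x y hxy; tauto
  loopless := by
    constructor; intro x hx
    rcases hx with hx | hx <;> · unfold oddR at hx; omega

lemma oddG_adj {k : ℕ} (hk : 4 ≤ k) (x y : Fin (2 * k + 1)) : (oddG k hk).Adj x y ↔
    oddR k x.val y.val ∨ oddR k y.val x.val := Iff.rfl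

instance {k : ℕ} {hk : 4 ≤ k} : DecidableRel (oddG k hk).Adj := fun x y =>
  decidable_of_iff _ (oddG_adj hk x y).symm

/-- Degree function of `oddG`. -/
def dOdd (k : ℕ) (x : ℕ) : ℕ := if x < k then x + 1 else if x < 2 * k then 2 * k - x else 2

lemma oddG_degree {k : ℕ} (hk : 4 ≤ k) (x : Fin (2 * k + 1)) :
    (oddG k hk).degree x = dOdd k x.val := by
  have hx2 := x.isLt
  by_cases hx : x.val < k
  · by_cases hxk : x.val = k - 1
    · -- the vertex u_k
      rw [degree_eq_of _ x (insert (2 * k) ((Finset.Icc k (2 * k - 1)).erase (2 * k - 2)))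
        (fun y => by
          rw [oddG_adj]
          simp only [Finset.mem_insert, Finset.mem_erase, Finset.mem_Icc]
          unfold oddR
          omega)
        (fun y hy => by
          simp only [Finset.mem_insert, Finset.mem_erase, Finset.mem_Icc] at hy
          omega)]
      rw [Finset.card_insert_of_notMem (by simp only [Finset.mem_erase, Finset.mem_Icc]; omega),
        Finset.card_erase_of_mem (by simp only [Finset.mem_Icc]; omega), Nat.card_Icc]
      unfold dOdd
      simp only [if_pos hx]
      omega
    · rw [degree_eq_of _ x (Finset.Icc k (k + x.val))
        (fun y => by
          rw [oddG_adj]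
          simp only [Finset.mem_Icc]
          unfold oddR
          omega)
        (fun y hy => by simp only [Finset.mem_Icc] at hy; omega)]
      rw [Nat.card_Icc]
      unfold dOdd
      simp only [if_pos hx]
      omega
  · by_cases hx2k : x.val < 2 * k
    · by_cases hxe : x.val = 2 * k - 2
      · -- the vertex v_{k-1}
        rw [degree_eq_of _ x ({k - 2, 2 * k})
          (fun y => by
            rw [oddG_adj]
            simp only [Finset.mem_insert, Finset.mem_singleton]
            unfold oddR
            omega)
          (fun y hy => by
            simp only [Finset.mem_insert, Finset.mem_singleton] at hy
            omega)]
        rw [card2 (by omega)]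
        unfold dOdd
        split_ifs <;> omega
      · rw [degree_eq_of _ x (Finset.Ico (x.val - k) k)
          (fun y => by
            rw [oddG_adj]
            simp only [Finset.mem_Ico]
            unfold oddR
            omega)
          (fun y hy => by simp only [Finset.mem_Ico] at hy; omega)]
        rw [Nat.card_Ico]
        unfold dOdd
        split_ifs <;> omega
    · -- the vertex w = 2k
      have hxw : x.val = 2 * k := by omega
      rw [degree_eq_of _ x ({k - 1, 2 * k - 2})
        (fun y => by
          rw [oddG_adj]
          simp only [Finset.mem_insert, Finset.mem_singleton]
          unfold oddR
          omega)
        (fun y hy => by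
          simp only [Finset.mem_insert, Finset.mem_singleton] at hy
          omega)]
      rw [card2 (by omega)]
      unfold dOdd
      split_ifs <;> omega

lemma oddG_hi {k : ℕ} (hk : 4 ≤ k) : (oddG k hk).HighlyIrregular := by
  intro v u w hvu hvw hne
  have hval : u.val ≠ w.val := fun hh => hne (Fin.ext hh)
  have hu2 := u.isLt
  have hw2 := w.isLt
  have hv2 := v.isLt
  rw [Nat.card_eq_fintype_card, Nat.card_eq_fintype_card,
    SimpleGraph.card_neighborSet_eq_degree, SimpleGraph.card_neighborSet_eq_degree,
    oddG_degree hk, oddG_degree hk]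
  rw [oddG_adj] at hvu hvw
  unfold oddR at hvu hvw
  unfold dOdd
  split_ifs <;> omega

lemma oddG_connected {k : ℕ} (hk : 4 ≤ k) : (oddG k hk).Connected := by
  rw [SimpleGraph.connected_iff]
  refine ⟨?_, ⟨⟨0, by omega⟩⟩⟩
  have key : ∀ z : Fin (2 * k + 1), (oddG k hk).Reachable z ⟨k, by omega⟩ := by
    intro z
    have hz2 := z.isLt
    by_cases hz : z.val < k
    · exact SimpleGraph.Adj.reachable
        (by rw [oddG_adj]; left; unfold oddR; simp; omega)
    · by_cases hz1 : z.val = k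
      · have : z = ⟨k, by omega⟩ := Fin.ext (by simp [hz1])
        rw [this]
      · by_cases hze : z.val = 2 * k - 2
        · -- 2k-2 ~ k-2 ~ k
          have h1 : (oddG k hk).Adj z ⟨k - 2, by omega⟩ := by
            rw [oddG_adj]; right; unfold oddR; simp; omega
          have h2 : (oddG k hk).Adj (⟨k - 2, by omega⟩ : Fin (2 * k + 1)) ⟨k, by omega⟩ := by
            rw [oddG_adj]; left; unfold oddR; simp; omega
          exact h1.reachable.trans h2.reachable
        · by_cases hzw : z.val = 2 * k
          · -- 2k ~ k-1 ~ k
            have h1 : (oddG k hk).Adj z ⟨k - 1, by omega⟩ := by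
              rw [oddG_adj]; left; unfold oddR; simp; omega
            have h2 : (oddG k hk).Adj (⟨k - 1, by omega⟩ : Fin (2 * k + 1)) ⟨k, by omega⟩ := by
              rw [oddG_adj]; left; unfold oddR; simp; omega
            exact h1.reachable.trans h2.reachable
          · -- v-side vertex other than 2k-2: adjacent to k-1
            have h1 : (oddG k hk).Adj z ⟨k - 1, by omega⟩ := by
              rw [oddG_adj]; right; unfold oddR; simp; omega
            have h2 : (oddG k hk).Adj (⟨k - 1, by omega⟩ : Fin (2 * k + 1)) ⟨k, by omega⟩ := by
              rw [oddG_adj]; left; unfold oddR; simp; omega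
            exact h1.reachable.trans h2.reachable
  intro x y
  exact (key x).trans (key y).symm

lemma one_vertex : ∃ G : SimpleGraph (Fin 1), G.Connected ∧ G.HighlyIrregular := by
  refine ⟨⊥, ?_, ?_⟩
  · rw [SimpleGraph.connected_iff]
    refine ⟨fun x y => ?_, ⟨0⟩⟩
    have : x = y := Subsingleton.elim x y
    rw [this]
  · intro v u w hvu _ _
    exact absurd hvu (by simp)

end HIProof

/-- For every `n ≥ 1`, there exists a connected highly irregular simple graph on
`n` vertices if and only if `n ∉ {3, 5, 7}`. -/
theorem exists_highly_irregular_iff :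
    ∀ n : ℕ, 1 ≤ n →
      ((∃ G : SimpleGraph (Fin n), G.Connected ∧ G.HighlyIrregular) ↔
        n ∉ ({3, 5, 7} : Set ℕ)) := by
  intro n hn
  constructor
  · rintro ⟨G, hc, hhi⟩ hmem
    classical
    letI : DecidableRel G.Adj := fun a b => Classical.dec _
    simp only [Set.mem_insert_iff, Set.mem_singleton_iff] at hmem
    rcases hmem with rfl | rfl | rfl
    · exact HIProof.no_hi_3 G hc hhi
    · exact HIProof.no_hi_5 G hc hhi
    · exact HIProof.no_hi_7 G hc hhi
  · intro hmem
    simp only [Set.mem_insert_iff, Set.mem_singleton_iff, not_or] at hmem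
    obtain ⟨h3, h5, h7⟩ := hmem
    rcases Nat.even_or_odd n with he | ho
    · have heven : n % 2 = 0 := Nat.even_iff.mp he
      obtain ⟨k, rfl⟩ : ∃ k, n = 2 * k := ⟨n / 2, by omega⟩
      · exact ⟨HIProof.halfG k, HIProof.halfG_connected (by omega), HIProof.halfG_hi k⟩
    · have hodd : n % 2 = 1 := Nat.odd_iff.mp ho
      obtain ⟨k, rfl⟩ : ∃ k, n = 2 * k + 1 := ⟨n / 2, by omega⟩
      by_cases hk : k = 0
      · subst hk
        exact HIProof.one_vertex
      · have hk4 : 4 ≤ k := by omega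
        exact ⟨HIProof.oddG k hk4, HIProof.oddG_connected hk4, HIProof.oddG_hi hk4⟩
end

section
/- Let n ≥ 3 and let r be a tournament on n vertices such that every vertex has out-degree (n−1)/2 (in particular n is odd), and suppose there is a natural number λ such that every pair of distinct vertices has exactly λ common out-neighbours (vertices w with r u w and r v w). Then n is congruent to 3 modulo 4 and 4λ = n − 3. -/
/-- A doubly regular tournament has order `n ≡ 3 (mod 4)`, with each pair of
vertices having exactly `(n − 3)/4` common out-neighbours. -/
theorem doubly_regular_tournament (n : ℕ) (hn : 3 ≤ n)
    (r : Fin n → Fin n → Prop)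
    (hirr : ∀ a, ¬ r a a)
    (htour : ∀ a b : Fin n, a ≠ b → Xor' (r a b) (r b a))
    (hreg : ∀ u : Fin n, Nat.card {w : Fin n // r u w} = (n - 1) / 2)
    (lam : ℕ)
    (hdreg : ∀ u v : Fin n, u ≠ v →
      Nat.card {w : Fin n // r u w ∧ r v w} = lam) :
    n % 4 = 3 ∧ 4 * lam = n - 3 := by
  classical
  set k := (n - 1) / 2 with hk
  have hcard : ∀ (p : Fin n → Prop),
      Nat.card {w : Fin n // p w} = (Finset.univ.filter p).card := by
    intro p
    rw [Nat.card_eq_fintype_card, Fintype.card_subtype]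
  have hout : ∀ u, (Finset.univ.filter (fun w => r u w)).card = k := by
    intro u; rw [← hcard]; exact hreg u
  -- double counting lemma
  have dc : ∀ q : Fin n → Fin n → Prop,
      (∑ u : Fin n, Nat.card {w : Fin n // q u w}) =
      ∑ w : Fin n, Nat.card {u : Fin n // q u w} := by
    intro q
    simp only [hcard, Finset.card_filter]
    exact Finset.sum_comm
  -- indegree
  have hin : ∀ w : Fin n, (Finset.univ.filter (fun u => r u w)).card = n - 1 - k := by
    intro w
    have hneg : Finset.univ.filter (fun u => ¬ r u w) =
        insert w (Finset.univ.filter (fun u => r w u)) := by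
      ext u
      simp only [Finset.mem_filter, Finset.mem_univ, true_and, Finset.mem_insert]
      constructor
      · intro h
        by_cases huw : u = w
        · exact Or.inl huw
        · rcases htour u w huw with ⟨h1, _⟩ | ⟨h1, h2⟩
          · exact absurd h1 h
          · exact Or.inr h1
      · rintro (rfl | h)
        · exact hirr u
        · intro h2
          have huw : u ≠ w := by rintro rfl; exact hirr u h
          rcases htour u w huw with ⟨_, h3⟩ | ⟨_, h3⟩
          · exact h3 h
          · exact h3 h2
    have hsum := Finset.card_filter_add_card_filter_not
      (s := (Finset.univ : Finset (Fin n))) (p := fun u => r u w)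
    rw [hneg, Finset.card_insert_of_notMem (by simp [hirr w]), hout w] at hsum
    simp only [Finset.card_univ, Fintype.card_fin] at hsum
    omega
  have hinN : ∀ w : Fin n, Nat.card {u : Fin n // r u w} = n - 1 - k := by
    intro w; rw [hcard]; exact hin w
  -- n - 1 = 2k
  have h2k : 2 * k = n - 1 := by
    have h := dc r
    simp only [hreg, hinN, Finset.sum_const, Finset.card_univ, Fintype.card_fin,
      smul_eq_mul] at h
    have hk' : k ≤ n - 1 := Nat.div_le_self _ _
    have : k = n - 1 - k := Nat.eq_of_mul_eq_mul_left (by omega) h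
    omega
  -- pick a base vertex
  have hnpos : 0 < n := by omega
  set u0 : Fin n := ⟨0, hnpos⟩ with hu0
  have hL : (∑ v : Fin n, Nat.card {w : Fin n // v ≠ u0 ∧ r u0 w ∧ r v w}) =
      (n - 1) * lam := by
    have hterm : ∀ v : Fin n, Nat.card {w : Fin n // v ≠ u0 ∧ r u0 w ∧ r v w} =
        if v = u0 then 0 else lam := by
      intro v
      by_cases hv : v = u0
      · subst hv; simp
      · rw [if_neg hv, ← hdreg u0 v (Ne.symm hv)]
        have hiff : ∀ w : Fin n, (v ≠ u0 ∧ r u0 w ∧ r v w) ↔ (r u0 w ∧ r v w) := by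
          intro w; tauto
        simp only [hiff]
    simp only [hterm]
    rw [← Finset.sum_erase_add _ _ (Finset.mem_univ u0), if_pos rfl, add_zero]
    rw [Finset.sum_ite_of_false (by intro x hx; exact Finset.ne_of_mem_erase hx)]
    simp [Finset.card_erase_of_mem]
  have hR : (∑ w : Fin n, Nat.card {v : Fin n // v ≠ u0 ∧ r u0 w ∧ r v w}) =
      k * (k - 1) := by
    have hterm : ∀ w : Fin n, Nat.card {v : Fin n // v ≠ u0 ∧ r u0 w ∧ r v w} =
        if r u0 w then k - 1 else 0 := by
      intro w
      rw [hcard]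
      by_cases hw : r u0 w
      · rw [if_pos hw]
        have heq : (@Finset.filter (Fin n) (fun v => v ≠ u0 ∧ r u0 w ∧ r v w)
            (fun v => Classical.propDecidable _) Finset.univ) =
            (Finset.univ.filter (fun v => r v w)).erase u0 := by
          ext v
          simp only [Finset.mem_filter, Finset.mem_univ, true_and,
            Finset.mem_erase]
          tauto
        rw [heq, Finset.card_erase_of_mem (by simp [hw]), hin w]
        omega
      · rw [if_neg hw]
        simp only [Finset.card_eq_zero]
        ext v
        simp only [Finset.mem_filter, Finset.mem_univ, true_and,
          Finset.notMem_empty, iff_false]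
        intro hqv
        exact hw hqv.2.1
    simp only [hterm]
    rw [← Finset.sum_filter, Finset.sum_const, hout u0, smul_eq_mul]
  have hkey : (n - 1) * lam = k * (k - 1) := by
    rw [← hL, ← hR]; exact dc _
  have hlam : 2 * lam = k - 1 := by
    have h1 : k * (2 * lam) = k * (k - 1) := by
      rw [← hkey, ← h2k]; ring
    exact Nat.eq_of_mul_eq_mul_left (by omega) h1
  omega
end
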